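/- Combining the two conditions of Theorem 3.8: if M∘C + N∘T = id_Z, T∘A − L∘T = H∘C, G = T∘B, L generates exponentially stable dynamics (solutions of e' = L e decay exponentially), z solves z' = A z + B u, and w solves w' = L w + G u + H C z, then ẑ(t) := M(C z(t)) + N(w(t)) satisfies ‖ẑ(t) − z(t)‖ → 0 as t → ∞. -/

import Mathlib

open Filter Real

theorem stmt_5 {Z U W : Type*} [NormedAddCommGroup Z] [NormedSpace ℝ Z]
    [NormedAddCommGroup U] [NormedSpace ℝ U]
    [NormedAddCommGroup W] [NormedSpace ℝ W] (q : ℕ)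
    (A : Z →L[ℝ] Z) (B : U →L[ℝ] Z) (T : Z →L[ℝ] W) (L : W →L[ℝ] W)
    (C : Z →L[ℝ] (Fin q → ℝ)) (H : (Fin q → ℝ) →L[ℝ] W) (G : U →L[ℝ] W)
    (M : (Fin q → ℝ) →L[ℝ] Z) (N : W →L[ℝ] Z)
    (hid : ∀ v : Z, M (C v) + N (T v) = v)
    (hinter : ∀ v : Z, T (A v) - L (T v) = H (C v))
    (hG : ∀ v : U, G v = T (B v))
    (F σ : ℝ) (hF : 0 < F) (hσ : 0 < σ)
    (hstab : ∀ e : ℝ → W, (∀ t : ℝ, HasDerivAt e (L (e t)) t) →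
      ∀ t : ℝ, 0 ≤ t → ‖e t‖ ≤ F * Real.exp (-σ * t) * ‖e 0‖)
    (u : ℝ → U) (z : ℝ → Z) (w : ℝ → W)
    (hz : ∀ t : ℝ, HasDerivAt z (A (z t) + B (u t)) t)
    (hw : ∀ t : ℝ, HasDerivAt w (L (w t) + G (u t) + H (C (z t))) t) :
    Tendsto (fun t => ‖(M (C (z t)) + N (w t)) - z t‖) atTop (nhds 0) := by
  set e : ℝ → W := fun t => w t - T (z t) with he
  have hde : ∀ t : ℝ, HasDerivAt e (L (e t)) t := by
    intro t
    have h1 : HasDerivAt (fun t => T (z t)) (T (A (z t) + B (u t))) t :=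
      (T.hasFDerivAt.comp_hasDerivAt t (hz t))
    have h2 := (hw t).sub h1
    convert h2 using 1
    · rfl
    have h3 := hinter (z t)
    have hg := hG (u t)
    simp only [map_add, map_sub, he]
    rw [hg]
    rw [sub_eq_iff_eq_add] at h3
    rw [h3]
    abel
  have hbound := hstab e hde
  have key : ∀ t : ℝ, (M (C (z t)) + N (w t)) - z t = N (e t) := by
    intro t
    have h := hid (z t)
    have h2 : N (T (z t)) = z t - M (C (z t)) := by
      rw [eq_sub_iff_add_eq, add_comm]; exact h
    simp only [he, map_sub]
    rw [h2]
    abel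
  have h0 : Tendsto (fun t => ‖N‖ * (F * Real.exp (-σ * t) * ‖e 0‖)) atTop (nhds 0) := by
    have h1 : Tendsto (fun t : ℝ => -σ * t) atTop atBot := by
      apply Tendsto.const_mul_atTop_of_neg (neg_neg_iff_pos.mpr hσ) tendsto_id
    have h2 : Tendsto (fun t : ℝ => Real.exp (-σ * t)) atTop (nhds 0) :=
      Real.tendsto_exp_atBot.comp h1
    have := ((h2.const_mul F).mul_const ‖e 0‖).const_mul ‖N‖
    simpa using this
  apply squeeze_zero' (Eventually.of_forall fun t => norm_nonneg _) _ h0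
  filter_upwards [eventually_ge_atTop (0 : ℝ)] with t ht
  rw [key t]
  calc ‖N (e t)‖ ≤ ‖N‖ * ‖e t‖ := N.le_opNorm _
    _ ≤ ‖N‖ * (F * Real.exp (-σ * t) * ‖e 0‖) := by
        exact mul_le_mul_of_nonneg_left (hbound t ht) (norm_nonneg N)
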